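/- Let H be a block matrix and L an invertible q×q matrix such that L (H^n)_SS L⁻¹ = ((H^n)_SS)† for all n ≥ 0 (non-Hermitian latent symmetry). Then L [H_SS̄ (H_S̄S̄)^n H_S̄S] L⁻¹ = [H_SS̄ (H_S̄S̄)^n H_S̄S]† for all n ≥ 0. -/

import Mathlib

open Matrix Finset

section aux

variable {p q : ℕ} (A : Matrix (Fin p) (Fin p) ℂ) (B : Matrix (Fin p) (Fin q) ℂ)
    (C : Matrix (Fin q) (Fin p) ℂ) (D : Matrix (Fin q) (Fin q) ℂ)

private lemma step12 (n : ℕ) :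
    ((fromBlocks A B C D) ^ (n+1)).toBlocks₁₂
      = A * ((fromBlocks A B C D) ^ n).toBlocks₁₂
        + B * ((fromBlocks A B C D) ^ n).toBlocks₂₂ := by
  conv_lhs => rw [pow_succ', ← fromBlocks_toBlocks ((fromBlocks A B C D) ^ n),
    fromBlocks_multiply, toBlocks_fromBlocks₁₂]

private lemma step21 (n : ℕ) :
    ((fromBlocks A B C D) ^ (n+1)).toBlocks₂₁
      = ((fromBlocks A B C D) ^ n).toBlocks₂₁ * A
        + ((fromBlocks A B C D) ^ n).toBlocks₂₂ * C := by
  conv_lhs => rw [pow_succ, ← fromBlocks_toBlocks ((fromBlocks A B C D) ^ n),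
    fromBlocks_multiply, toBlocks_fromBlocks₂₁]

private lemma step22l (n : ℕ) :
    ((fromBlocks A B C D) ^ (n+1)).toBlocks₂₂
      = C * ((fromBlocks A B C D) ^ n).toBlocks₁₂
        + D * ((fromBlocks A B C D) ^ n).toBlocks₂₂ := by
  conv_lhs => rw [pow_succ', ← fromBlocks_toBlocks ((fromBlocks A B C D) ^ n),
    fromBlocks_multiply, toBlocks_fromBlocks₂₂]

private lemma step22r (n : ℕ) :
    ((fromBlocks A B C D) ^ (n+1)).toBlocks₂₂
      = ((fromBlocks A B C D) ^ n).toBlocks₂₁ * B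
        + ((fromBlocks A B C D) ^ n).toBlocks₂₂ * D := by
  conv_lhs => rw [pow_succ, ← fromBlocks_toBlocks ((fromBlocks A B C D) ^ n),
    fromBlocks_multiply, toBlocks_fromBlocks₂₂]

private lemma T_zero : ((fromBlocks A B C D) ^ 0).toBlocks₁₂ = 0 := by
  rw [pow_zero, ← fromBlocks_one, toBlocks_fromBlocks₁₂]

private lemma U_zero : ((fromBlocks A B C D) ^ 0).toBlocks₂₁ = 0 := by
  rw [pow_zero, ← fromBlocks_one, toBlocks_fromBlocks₂₁]

private lemma toBlocks₁₂_one :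
    (1 : Matrix ((Fin p) ⊕ (Fin q)) ((Fin p) ⊕ (Fin q)) ℂ).toBlocks₁₂ = 0 := by
  rw [← fromBlocks_one, toBlocks_fromBlocks₁₂]

private lemma toBlocks₂₁_one :
    (1 : Matrix ((Fin p) ⊕ (Fin q)) ((Fin p) ⊕ (Fin q)) ℂ).toBlocks₂₁ = 0 := by
  rw [← fromBlocks_one, toBlocks_fromBlocks₂₁]

private lemma toBlocks₂₂_one :
    (1 : Matrix ((Fin p) ⊕ (Fin q)) ((Fin p) ⊕ (Fin q)) ℂ).toBlocks₂₂ = 1 := by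
  rw [← fromBlocks_one, toBlocks_fromBlocks₂₂]

private lemma S_zero : ((fromBlocks A B C D) ^ 0).toBlocks₂₂ = 1 := by
  rw [pow_zero, ← fromBlocks_one, toBlocks_fromBlocks₂₂]

private lemma T_formula (n : ℕ) :
    ((fromBlocks A B C D) ^ (n+1)).toBlocks₁₂
      = ∑ k ∈ range (n+1), A ^ (n-k) * B * ((fromBlocks A B C D) ^ k).toBlocks₂₂ := by
  induction n with
  | zero =>
      rw [step12]
      simp [toBlocks₁₂_one, toBlocks₂₂_one]
  | succ n ih =>
      rw [step12, ih, Matrix.mul_sum,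
        Finset.sum_range_succ
          (fun k => A ^ (n+1-k) * B * ((fromBlocks A B C D) ^ k).toBlocks₂₂) (n+1)]
      congr 1
      · refine Finset.sum_congr rfl fun k hk => ?_
        have hk' : k ≤ n := Nat.lt_succ_iff.mp (Finset.mem_range.mp hk)
        rw [Nat.succ_sub hk', pow_succ']
        simp [Matrix.mul_assoc]
      · simp

private lemma U_formula (n : ℕ) :
    ((fromBlocks A B C D) ^ (n+1)).toBlocks₂₁
      = ∑ k ∈ range (n+1), ((fromBlocks A B C D) ^ k).toBlocks₂₂ * C * A ^ (n-k) := by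
  induction n with
  | zero =>
      rw [step21]
      simp [toBlocks₂₁_one, toBlocks₂₂_one]
  | succ n ih =>
      rw [step21, ih, Matrix.sum_mul,
        Finset.sum_range_succ
          (fun k => ((fromBlocks A B C D) ^ k).toBlocks₂₂ * C * A ^ (n+1-k)) (n+1)]
      congr 1
      · refine Finset.sum_congr rfl fun k hk => ?_
        have hk' : k ≤ n := Nat.lt_succ_iff.mp (Finset.mem_range.mp hk)
        rw [Nat.succ_sub hk', pow_succ]
        simp [Matrix.mul_assoc]
      · simp

private lemma eq_left (n : ℕ) :
    ((fromBlocks A B C D) ^ (n+2)).toBlocks₂₂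
      = (∑ k ∈ range (n+1), C * A ^ (n-k) * B * ((fromBlocks A B C D) ^ k).toBlocks₂₂)
        + D * ((fromBlocks A B C D) ^ (n+1)).toBlocks₂₂ := by
  rw [step22l, T_formula, Matrix.mul_sum]
  congr 1
  exact Finset.sum_congr rfl fun k _ => by simp [Matrix.mul_assoc]

private lemma eq_right (n : ℕ) :
    ((fromBlocks A B C D) ^ (n+2)).toBlocks₂₂
      = (∑ k ∈ range (n+1), ((fromBlocks A B C D) ^ k).toBlocks₂₂ * (C * A ^ (n-k) * B))
        + ((fromBlocks A B C D) ^ (n+1)).toBlocks₂₂ * D := by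
  rw [step22r, U_formula, Matrix.sum_mul]
  congr 1
  exact Finset.sum_congr rfl fun k _ => by simp [Matrix.mul_assoc]

end aux

/-- The non-Hermitian latent symmetry `L (H^n)_SS L⁻¹ = ((H^n)_SS)†` for all n
implies `L (H_SS̄ (H_S̄S̄)^n H_S̄S) L⁻¹ = (H_SS̄ (H_S̄S̄)^n H_S̄S)†` for all n. -/
theorem latent_symmetry_implies_block_relations (p q : ℕ)
    (A : Matrix (Fin p) (Fin p) ℂ) (B : Matrix (Fin p) (Fin q) ℂ)
    (C : Matrix (Fin q) (Fin p) ℂ) (D : Matrix (Fin q) (Fin q) ℂ)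
    (L : Matrix (Fin q) (Fin q) ℂ) (hL : IsUnit L)
    (hlatent : ∀ n : ℕ, L * ((Matrix.fromBlocks A B C D) ^ n).toBlocks₂₂ * L⁻¹
      = (((Matrix.fromBlocks A B C D) ^ n).toBlocks₂₂)ᴴ) :
    ∀ n : ℕ, L * (C * A ^ n * B) * L⁻¹ = (C * A ^ n * B)ᴴ := by
  have hdet : IsUnit L.det := (Matrix.isUnit_iff_isUnit_det L).mp hL
  have hinvL : L⁻¹ * L = 1 := Matrix.nonsing_inv_mul L hdet
  have hLinv : L * L⁻¹ = 1 := Matrix.mul_nonsing_inv L hdet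
  set S : ℕ → Matrix (Fin q) (Fin q) ℂ :=
    fun n => ((Matrix.fromBlocks A B C D) ^ n).toBlocks₂₂ with hS
  have hS' : ∀ n : ℕ, L * S n = (S n)ᴴ * L := by
    intro n
    calc L * S n = L * S n * (L⁻¹ * L) := by rw [hinvL, mul_one]
      _ = (L * S n * L⁻¹) * L := by simp [Matrix.mul_assoc]
      _ = (S n)ᴴ * L := by rw [hlatent n]
  have key : ∀ n : ℕ, L * (C * A ^ n * B) = (C * A ^ n * B)ᴴ * L := by
    intro n
    induction n using Nat.strong_induction_on with
    | _ n ih =>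
      have e1 : L * S (n+2)
          = (∑ k ∈ range (n+1), L * (C * A ^ (n-k) * B * S k)) + L * (D * S (n+1)) := by
        show L * ((Matrix.fromBlocks A B C D) ^ (n+2)).toBlocks₂₂ = _
        rw [eq_left A B C D n, mul_add, Matrix.mul_sum]
      have e2 : (S (n+2))ᴴ * L
          = (∑ k ∈ range (n+1), (C * A ^ (n-k) * B)ᴴ * ((S k)ᴴ * L))
            + Dᴴ * ((S (n+1))ᴴ * L) := by
        show (((Matrix.fromBlocks A B C D) ^ (n+2)).toBlocks₂₂)ᴴ * L = _
        rw [eq_right A B C D n, conjTranspose_add, conjTranspose_sum, add_mul,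
          Finset.sum_mul]
        congr 1
        · exact Finset.sum_congr rfl fun k _ => by rw [conjTranspose_mul]; simp [Matrix.mul_assoc]; rfl
        · rw [conjTranspose_mul]; simp [Matrix.mul_assoc]; rfl
      have hD : L * D = Dᴴ * L := by
        have h1 := hS' 1
        rw [hS] at h1
        simpa [toBlocks_fromBlocks₂₂] using h1
      have hterm : ∀ k ∈ range (n+1), k ≠ 0 →
          L * (C * A ^ (n-k) * B * S k) = (C * A ^ (n-k) * B)ᴴ * ((S k)ᴴ * L) := by
        intro k hk hk0
        have hklt : n - k < n := by
          have : k < n + 1 := Finset.mem_range.mp hk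
          omega
        calc L * (C * A ^ (n-k) * B * S k)
            = (L * (C * A ^ (n-k) * B)) * S k := by simp [Matrix.mul_assoc]
          _ = ((C * A ^ (n-k) * B)ᴴ * L) * S k := by rw [ih _ hklt]
          _ = (C * A ^ (n-k) * B)ᴴ * (L * S k) := by simp [Matrix.mul_assoc]
          _ = (C * A ^ (n-k) * B)ᴴ * ((S k)ᴴ * L) := by rw [hS' k]
      have hDterm : L * (D * S (n+1)) = Dᴴ * ((S (n+1))ᴴ * L) := by
        calc L * (D * S (n+1)) = (L * D) * S (n+1) := by simp [Matrix.mul_assoc]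
          _ = (Dᴴ * L) * S (n+1) := by rw [hD]
          _ = Dᴴ * (L * S (n+1)) := by simp [Matrix.mul_assoc]
          _ = Dᴴ * ((S (n+1))ᴴ * L) := by rw [hS' (n+1)]
      have hmem : (0 : ℕ) ∈ range (n+1) := Finset.mem_range.mpr (Nat.succ_pos n)
      have hPQ : (∑ k ∈ range (n+1), L * (C * A ^ (n-k) * B * S k)) + L * (D * S (n+1))
          = (∑ k ∈ range (n+1), (C * A ^ (n-k) * B)ᴴ * ((S k)ᴴ * L))
            + Dᴴ * ((S (n+1))ᴴ * L) := by
        rw [← e1, ← e2, hS' (n+2)]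
      rw [← Finset.add_sum_erase _ _ hmem, ← Finset.add_sum_erase _ _ hmem,
        Finset.sum_congr rfl (fun k hk => hterm k (Finset.mem_erase.mp hk).2
          (Finset.mem_erase.mp hk).1), hDterm] at hPQ
      -- hPQ : a + s + d = b + s + d  with a, b the k = 0 terms
      have hab : L * (C * A ^ (n-0) * B * S 0) = (C * A ^ (n-0) * B)ᴴ * ((S 0)ᴴ * L) := by
        have h2 : L * (C * A ^ (n-0) * B * S 0)
            + ((∑ k ∈ (range (n+1)).erase 0, (C * A ^ (n-k) * B)ᴴ * ((S k)ᴴ * L))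
              + Dᴴ * ((S (n+1))ᴴ * L))
            = (C * A ^ (n-0) * B)ᴴ * ((S 0)ᴴ * L)
            + ((∑ k ∈ (range (n+1)).erase 0, (C * A ^ (n-k) * B)ᴴ * ((S k)ᴴ * L))
              + Dᴴ * ((S (n+1))ᴴ * L)) := by
          rw [← add_assoc, ← add_assoc]
          exact hPQ
        exact add_right_cancel h2
      have hS0 : S 0 = 1 := by rw [hS]; exact S_zero A B C D
      rw [Nat.sub_zero, hS0, mul_one, conjTranspose_one, one_mul] at hab
      exact hab
  intro n
  rw [key n, mul_assoc, hLinv, mul_one]
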